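/- Bisimilarity of engine variants (Proposition 3): Eng ≈ Enḡ, i.e., the engine Eng is weakly bisimilar to the variant engine Enḡ obtained from Eng by changing the evolution map so that heat(ξu,cool) = −0.8 (instead of −1) when ξu(cool) = on. -/

import Mathlib

namespace CCPS

/-! ## Names and values -/

abbrev Chan := ℕ
abbrev SensName := ℕ
abbrev ActName := ℕ
abbrev Val := ℝ

/-! ## Processes (value binders as functions, process variables in de Bruijn style) -/

inductive Proc : Type where
  | nil   : Proc
  | pvar  : ℕ → Proc
  | tick  : Proc → Proc
  | par   : Proc → Proc → Proc
  | out   : Chan → Val → Proc → Proc → Proc      -- ⌊c̄⟨v⟩.P⌋Q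
  | inp   : Chan → (Val → Proc) → Proc → Proc    -- ⌊c(x).P⌋Q
  | read  : SensName → (Val → Proc) → Proc → Proc -- ⌊s?(x).P⌋Q
  | write : ActName → Val → Proc → Proc → Proc   -- ⌊a!⟨v⟩.P⌋Q
  | res   : Proc → Chan → Proc                   -- P∖c
  | fix   : Proc → Proc                          -- fix X.P  (binds de Bruijn index 0)

/-- Lift (shift) all process variables ≥ cutoff `c` by one. -/
def Proc.lift (c : ℕ) : Proc → Proc
  | .nil => .nil
  | .pvar m => if m < c then .pvar m else .pvar (m+1)
  | .tick P => .tick (Proc.lift c P)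
  | .par P Q => .par (Proc.lift c P) (Proc.lift c Q)
  | .out ch v P Q => .out ch v (Proc.lift c P) (Proc.lift c Q)
  | .inp ch f Q => .inp ch (fun v => Proc.lift c (f v)) (Proc.lift c Q)
  | .read s f Q => .read s (fun v => Proc.lift c (f v)) (Proc.lift c Q)
  | .write a v P Q => .write a v (Proc.lift c P) (Proc.lift c Q)
  | .res P ch => .res (Proc.lift c P) ch
  | .fix P => .fix (Proc.lift (c+1) P)

/-- Substitute process variable `n` by `R`. -/
def Proc.subst : Proc → ℕ → Proc → Proc
  | .nil, _, _ => .nil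
  | .pvar m, n, R => if m = n then R else if n < m then .pvar (m-1) else .pvar m
  | .tick P, n, R => .tick (Proc.subst P n R)
  | .par P Q, n, R => .par (Proc.subst P n R) (Proc.subst Q n R)
  | .out ch v P Q, n, R => .out ch v (Proc.subst P n R) (Proc.subst Q n R)
  | .inp ch f Q, n, R => .inp ch (fun v => Proc.subst (f v) n R) (Proc.subst Q n R)
  | .read s f Q, n, R => .read s (fun v => Proc.subst (f v) n R) (Proc.subst Q n R)
  | .write a v P Q, n, R => .write a v (Proc.subst P n R) (Proc.subst Q n R)
  | .res P ch, n, R => .res (Proc.subst P n R) ch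
  | .fix P, n, R => .fix (Proc.subst P (n+1) (Proc.lift 0 R))

/-- Unfolding of recursion: P[fix X.P / X]. -/
def Proc.unfold (P : Proc) : Proc := Proc.subst P 0 (.fix P)

/-! ## Labels -/

inductive Label : Type where
  | tick  : Label
  | tau   : Label
  | out   : Chan → Val → Label     -- c̄v
  | inp   : Chan → Val → Label     -- cv
  | write : ActName → Val → Label  -- a!v
  | read  : SensName → Val → Label -- s?v

/-! ## Labelled transition system for processes.

Untimed transitions `UStep` (labels different from tick) are defined first;
then timed transitions `TStep` (which use the absence of τ-transitions
negatively) are defined on top of them, and `Step` combines the two. -/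

inductive UStep : Proc → Label → Proc → Prop where
  | outp  : UStep (.out c v P Q) (.out c v) P
  | inpp  : UStep (.inp c f Q) (.inp c v) (f v)
  | write : UStep (.write a v P Q) (.write a v) P
  | read  : UStep (.read s f Q) (.read s v) (f v)
  | comL  : UStep P (.out c v) P' → UStep Q (.inp c v) Q' →
            UStep (.par P Q) .tau (.par P' Q')
  | comR  : UStep P (.inp c v) P' → UStep Q (.out c v) Q' →
            UStep (.par P Q) .tau (.par P' Q')
  | parL  : UStep P l P' → l ≠ .tick → UStep (.par P Q) l (.par P' Q)
  | parR  : UStep Q l Q' → l ≠ .tick → UStep (.par P Q) l (.par P Q')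
  | res   : UStep P l P' → (∀ v, l ≠ .inp c v ∧ l ≠ .out c v) →
            UStep (.res P c) l (.res P' c)
  | unfold : UStep (Proc.unfold P) l Q → UStep (.fix P) l Q

inductive TStep : Proc → Proc → Prop where
  | nil          : TStep .nil .nil
  | delay        : TStep (.tick P) P
  | timeoutOut   : TStep (.out c v P Q) Q
  | timeoutInp   : TStep (.inp c f Q) Q
  | timeoutRead  : TStep (.read s f Q) Q
  | timeoutWrite : TStep (.write a v P Q) Q
  | timePar      : TStep P P' → TStep Q Q' → (∀ R, ¬ UStep (.par P Q) .tau R) →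
                   TStep (.par P Q) (.par P' Q')
  | res          : TStep P P' → TStep (.res P c) (.res P' c)
  | unfold       : TStep (Proc.unfold P) Q → TStep (.fix P) Q

/-- The process LTS. -/
def Step (P : Proc) (l : Label) (Q : Proc) : Prop :=
  match l with
  | .tick => TStep P Q
  | _ => UStep P l Q

/-! ## Structural congruence: the least congruence containing commutativity and
associativity of parallel composition, with nil as neutral element. -/

inductive SC : Proc → Proc → Prop where
  | refl      : SC P P
  | symm      : SC P Q → SC Q P
  | trans     : SC P Q → SC Q R → SC P R
  | parComm   : SC (.par P Q) (.par Q P)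
  | parAssoc  : SC (.par (.par P Q) R) (.par P (.par Q R))
  | parNil    : SC (.par P .nil) P
  | tickCong  : SC P P' → SC (.tick P) (.tick P')
  | parCong   : SC P P' → SC Q Q' → SC (.par P Q) (.par P' Q')
  | outCong   : SC P P' → SC Q Q' → SC (.out c v P Q) (.out c v P' Q')
  | inpCong   : (∀ v, SC (f v) (g v)) → SC Q Q' → SC (.inp c f Q) (.inp c g Q')
  | readCong  : (∀ v, SC (f v) (g v)) → SC Q Q' → SC (.read s f Q) (.read s g Q')
  | writeCong : SC P P' → SC Q Q' → SC (.write a v P Q) (.write a v P' Q')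
  | resCong   : SC P P' → SC (.res P c) (.res P' c)
  | fixCong   : SC P P' → SC (.fix P) (.fix P')

/-! ## Static predicates on processes -/

/-- All free process variables are < d. -/
inductive ClosedAbove : ℕ → Proc → Prop where
  | nil   : ClosedAbove d .nil
  | pvar  : m < d → ClosedAbove d (.pvar m)
  | tick  : ClosedAbove d P → ClosedAbove d (.tick P)
  | par   : ClosedAbove d P → ClosedAbove d Q → ClosedAbove d (.par P Q)
  | out   : ClosedAbove d P → ClosedAbove d Q → ClosedAbove d (.out c v P Q)
  | inp   : (∀ v, ClosedAbove d (f v)) → ClosedAbove d Q → ClosedAbove d (.inp c f Q)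
  | read  : (∀ v, ClosedAbove d (f v)) → ClosedAbove d Q → ClosedAbove d (.read s f Q)
  | write : ClosedAbove d P → ClosedAbove d Q → ClosedAbove d (.write a v P Q)
  | res   : ClosedAbove d P → ClosedAbove d (.res P c)
  | fix   : ClosedAbove (d+1) P → ClosedAbove d (.fix P)

/-- A closed process: no free process variables. -/
def Proc.Closed (P : Proc) : Prop := ClosedAbove 0 P

/-- `TG n P`: process variable `n` occurs only time-guarded in `P`
(occurrences under `tick.-` or in the timeout continuation `Q` of `⌊π.P⌋Q`
are time-guarded). -/
inductive TG : ℕ → Proc → Prop where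
  | nil   : TG n .nil
  | pvar  : m ≠ n → TG n (.pvar m)
  | tick  : TG n (.tick P)
  | par   : TG n P → TG n Q → TG n (.par P Q)
  | out   : TG n P → TG n (.out c v P Q)
  | inp   : (∀ v, TG n (f v)) → TG n (.inp c f Q)
  | read  : (∀ v, TG n (f v)) → TG n (.read s f Q)
  | write : TG n P → TG n (.write a v P Q)
  | res   : TG n P → TG n (.res P c)
  | fix   : TG (n+1) P → TG n (.fix P)

/-- Well-formed processes: in every recursion `fix X.P` all occurrences of `X`
in `P` are time-guarded. -/
inductive WF : Proc → Prop where
  | nil   : WF .nil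
  | pvar  : WF (.pvar m)
  | tick  : WF P → WF (.tick P)
  | par   : WF P → WF Q → WF (.par P Q)
  | out   : WF P → WF Q → WF (.out c v P Q)
  | inp   : (∀ v, WF (f v)) → WF Q → WF (.inp c f Q)
  | read  : (∀ v, WF (f v)) → WF Q → WF (.read s f Q)
  | write : WF P → WF Q → WF (.write a v P Q)
  | res   : WF P → WF (.res P c)
  | fix   : TG 0 P → WF P → WF (.fix P)

/-- Non-interfering process: it never reads sensors nor writes actuators. -/
inductive NonInterfering : Proc → Prop where
  | nil  : NonInterfering .nil
  | pvar : NonInterfering (.pvar m)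
  | tick : NonInterfering P → NonInterfering (.tick P)
  | par  : NonInterfering P → NonInterfering Q → NonInterfering (.par P Q)
  | out  : NonInterfering P → NonInterfering Q → NonInterfering (.out c v P Q)
  | inp  : (∀ v, NonInterfering (f v)) → NonInterfering Q → NonInterfering (.inp c f Q)
  | res  : NonInterfering P → NonInterfering (.res P c)
  | fix  : NonInterfering P → NonInterfering (.fix P)

/-- `DevOK A S P`: every actuator mentioned in `P` is in `A` and every sensor
mentioned in `P` is in `S`. -/
inductive DevOK (A S : Finset ℕ) : Proc → Prop where
  | nil   : DevOK A S .nil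
  | pvar  : DevOK A S (.pvar m)
  | tick  : DevOK A S P → DevOK A S (.tick P)
  | par   : DevOK A S P → DevOK A S Q → DevOK A S (.par P Q)
  | out   : DevOK A S P → DevOK A S Q → DevOK A S (.out c v P Q)
  | inp   : (∀ v, DevOK A S (f v)) → DevOK A S Q → DevOK A S (.inp c f Q)
  | read  : s ∈ S → (∀ v, DevOK A S (f v)) → DevOK A S Q → DevOK A S (.read s f Q)
  | write : a ∈ A → DevOK A S P → DevOK A S Q → DevOK A S (.write a v P Q)
  | res   : DevOK A S P → DevOK A S (.res P c)
  | fix   : DevOK A S P → DevOK A S (.fix P)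

/-! ## Physical environments -/

structure Env where
  X : Finset ℕ                       -- state variables
  A : Finset ℕ                       -- actuators
  S : Finset ℕ                       -- sensors
  xi_x : {n // n ∈ X} → ℝ            -- state function
  xi_u : {n // n ∈ A} → ℝ            -- actuator function
  xi_w : {n // n ∈ X} → ℝ            -- uncertainty function
  evol : ({n // n ∈ X} → ℝ) → ({n // n ∈ A} → ℝ) → ({n // n ∈ X} → ℝ) →
         Set ({n // n ∈ X} → ℝ)      -- evolution map
  xi_e : {n // n ∈ S} → ℝ            -- sensor-error function
  meas : ({n // n ∈ X} → ℝ) → ({n // n ∈ S} → ℝ) →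
         Set ({n // n ∈ S} → ℝ)      -- measurement map
  inv  : ({n // n ∈ X} → ℝ) → Prop   -- invariant function

/-- Possible measurements of sensor `s` in `E`. -/
def readSensor (E : Env) (s : ℕ) : Set ℝ :=
  { r | ∃ h : s ∈ E.S, ∃ ξ ∈ E.meas E.xi_x E.xi_e, r = ξ ⟨s, h⟩ }

/-- Update the value of actuator `a` to `v`. -/
def updateAct (E : Env) (a : ℕ) (v : ℝ) : Env :=
  { E with xi_u := fun b => if (b : ℕ) = a then v else E.xi_u b }

/-- The set of next admissible environments. -/
def nextEnv (E : Env) : Set Env :=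
  { E' | ∃ ξ ∈ E.evol E.xi_x E.xi_u E.xi_w, E' = { E with xi_x := ξ } }

/-- The invariant of `E`, evaluated at the current state. -/
def invHolds (E : Env) : Prop := E.inv E.xi_x

/-! ## Disjoint union of environments -/

/-- Glue two functions defined on finite sets into one on the union
(well defined on disjoint sets). -/
def glue {X1 X2 : Finset ℕ} (f : {n // n ∈ X1} → ℝ) (g : {n // n ∈ X2} → ℝ) :
    {n // n ∈ X1 ∪ X2} → ℝ :=
  fun x => if h : (x : ℕ) ∈ X1 then f ⟨x, h⟩
           else g ⟨x, (Finset.mem_union.mp x.2).resolve_left h⟩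

/-- Restriction of a function on a union to the left component. -/
def restrL {X1 X2 : Finset ℕ} (f : {n // n ∈ X1 ∪ X2} → ℝ) : {n // n ∈ X1} → ℝ :=
  fun x => f ⟨x, Finset.mem_union_left _ x.2⟩

/-- Restriction of a function on a union to the right component. -/
def restrR {X1 X2 : Finset ℕ} (f : {n // n ∈ X1 ∪ X2} → ℝ) : {n // n ∈ X2} → ℝ :=
  fun x => f ⟨x, Finset.mem_union_right _ x.2⟩

/-- Disjointness of the name sets of two environments. -/
def EnvDisj (E1 E2 : Env) : Prop :=
  Disjoint E1.X E2.X ∧ Disjoint E1.A E2.A ∧ Disjoint E1.S E2.S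

/-- Disjoint union `E1 ⊎ E2` of two environments. -/
def Env.disjUnion (E1 E2 : Env) : Env where
  X := E1.X ∪ E2.X
  A := E1.A ∪ E2.A
  S := E1.S ∪ E2.S
  xi_x := glue E1.xi_x E2.xi_x
  xi_u := glue E1.xi_u E2.xi_u
  xi_w := glue E1.xi_w E2.xi_w
  evol := fun ξ ψ φ =>
    { ξ' | ∃ ξ1 ∈ E1.evol (restrL ξ) (restrL ψ) (restrL φ),
           ∃ ξ2 ∈ E2.evol (restrR ξ) (restrR ψ) (restrR φ), ξ' = glue ξ1 ξ2 }
  xi_e := glue E1.xi_e E2.xi_e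
  meas := fun ξ η =>
    { m | ∃ m1 ∈ E1.meas (restrL ξ) (restrL η),
          ∃ m2 ∈ E2.meas (restrR ξ) (restrR η), m = glue m1 m2 }
  inv := fun ξ => E1.inv (restrL ξ) ∧ E2.inv (restrR ξ)

/-! ## Cyber-physical systems -/

structure CPS where
  env  : Env
  proc : Proc

/-- Well-formed CPS: closed, time-guarded process mentioning only devices of
its environment. -/
def CPS.WellFormed (M : CPS) : Prop :=
  M.proc.Closed ∧ WF M.proc ∧ DevOK M.env.A M.env.S M.proc

/-- Disjoint union of (non-interfering) CPSs. -/
def CPS.disjUnion (M O : CPS) : CPS :=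
  ⟨M.env.disjUnion O.env, .par M.proc O.proc⟩

/-- Untimed CPS transitions (rules Out, Inp, SensRead, ActWrite, Tau). -/
inductive CStepU : CPS → Label → CPS → Prop where
  | out : UStep P (.out c v) P' → invHolds E →
          CStepU ⟨E, P⟩ (.out c v) ⟨E, P'⟩
  | inp : UStep P (.inp c v) P' → invHolds E →
          CStepU ⟨E, P⟩ (.inp c v) ⟨E, P'⟩
  | sensRead : UStep P (.read s v) P' → invHolds E → v ∈ readSensor E s →
          CStepU ⟨E, P⟩ .tau ⟨E, P'⟩
  | actWrite : UStep P (.write a v) P' → invHolds E →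
          CStepU ⟨E, P⟩ .tau ⟨updateAct E a v, P'⟩
  | tau : UStep P .tau P' → invHolds E →
          CStepU ⟨E, P⟩ .tau ⟨E, P'⟩

/-- The CPS LTS (rule Time for tick, `CStepU` otherwise). -/
def CStep (M : CPS) (α : Label) (N : CPS) : Prop :=
  match α with
  | .tick => TStep M.proc N.proc ∧ (∀ N', ¬ CStepU M .tau N') ∧
             invHolds M.env ∧ N.env ∈ nextEnv M.env
  | _ => CStepU M α N

/-! ## Weak transitions and bisimulation -/

def TauStep (M N : CPS) : Prop := CStep M .tau N

/-- `M ⇒ N`. -/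
def WeakTau : CPS → CPS → Prop := Relation.ReflTransGen TauStep

/-- `M ⇒α⇒ N`. -/
def WeakStep (M : CPS) (α : Label) (N : CPS) : Prop :=
  ∃ M₁ M₂, WeakTau M M₁ ∧ CStep M₁ α M₂ ∧ WeakTau M₂ N

/-- `M ⇒α̂⇒ N`. -/
def WeakHat (M : CPS) (α : Label) (N : CPS) : Prop :=
  match α with
  | .tau => WeakTau M N
  | _ => WeakStep M α N

def IsBisimulation (R : CPS → CPS → Prop) : Prop :=
  (∀ {M N}, R M N → R N M) ∧
  (∀ {M N α M'}, R M N → CStep M α M' → ∃ N', WeakHat N α N' ∧ R M' N')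

/-- Weak bisimilarity `M ≈ N`. -/
def Bisim (M N : CPS) : Prop := ∃ R, IsBisimulation R ∧ R M N

/-! ## Traces -/

/-- Reachability in the CPS LTS. -/
def Reach : CPS → CPS → Prop :=
  Relation.ReflTransGen (fun M N => ∃ α, CStep M α N)

def UntimedStep (M N : CPS) : Prop := ∃ α, α ≠ Label.tick ∧ CStep M α N

def UntimedReach : CPS → CPS → Prop := Relation.ReflTransGen UntimedStep

/-- One time slot: some untimed activity followed by a tick. -/
def SlotStep (M N : CPS) : Prop := ∃ M', UntimedReach M M' ∧ CStep M' .tick N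

/-! ## Derived process notation -/

/-- Persistent prefix `π.P := fix X.⌊π.P⌋X` (output). -/
def prefOut (c : Chan) (v : Val) (P : Proc) : Proc :=
  .fix (.out c v (Proc.lift 0 P) (.pvar 0))

/-- Persistent prefix (actuator write). -/
def prefWrite (a : ActName) (v : Val) (P : Proc) : Proc :=
  .fix (.write a v (Proc.lift 0 P) (.pvar 0))

/-- Persistent prefix (sensor read). -/
def prefRead (s : SensName) (f : Val → Proc) : Proc :=
  .fix (.read s (fun v => Proc.lift 0 (f v)) (.pvar 0))

/-- `tick^k.P`. -/
def Proc.ticks : ℕ → Proc → Proc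
  | 0, P => P
  | n+1, P => .tick (Proc.ticks n P)

/-! ## The engine case study -/

noncomputable section
open Classical

def engDelta : ℝ := 0.4   -- uncertainty δ
def engEps : ℝ := 0.1     -- sensor error ε

/-- Value written on the actuator `cool` to turn the cooling on
(the actuator is on iff its value is negative). -/
def valOn : Val := -1
/-- Value written on the actuator `cool` to turn the cooling off. -/
def valOff : Val := 1

def IsOn (u : ℝ) : Prop := u < 0
def IsOff (u : ℝ) : Prop := 0 ≤ u

/-- `heat(ξu, cool)`: `-coolRate` if the cooling is active, `+1` otherwise. -/
def engHeat (coolRate : ℝ) (u : ℝ) : ℝ := if u < 0 then -coolRate else 1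

def warningCh : Chan := 0
def alarmCh : Chan := 1
def failureCh : Chan := 2

/-- The physical environment of the engine, with cooling power `coolRate`,
state variable `x` (temperature), actuator `a` (cool) and sensor `s`. -/
def EngEnvN (coolRate : ℝ) (x a s : ℕ) : Env where
  X := {x}
  A := {a}
  S := {s}
  xi_x := fun _ => 0
  xi_u := fun _ => valOff
  xi_w := fun _ => engDelta
  evol := fun ξ ψ _ =>
    { ξ' | ∃ γ ∈ Set.Icc (-engDelta) engDelta,
           ∀ y u, ξ' y = ξ y + engHeat coolRate (ψ u) + γ }
  xi_e := fun _ => engEps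
  meas := fun ξ _ =>
    { m | ∀ t y, m t ∈ Set.Icc (ξ y - engEps) (ξ y + engEps) }
  inv := fun ξ => ∀ y, 0 ≤ ξ y ∧ ξ y ≤ 30

/-- The controller of the engine with identifier `ID`, actuator `a` and
sensor `s`:
`Ctrl = fix X. s?(x). if x > 10 then Cooling else tick.X` with
`Cooling = a!⟨on⟩.fix Y.tick⁵.s?(x). if x > 10 then w̄arning⟨ID⟩.Y else a!⟨off⟩.tick.X`. -/
def CtrlN (ID : Val) (a s : ℕ) : Proc :=
  .fix (prefRead s (fun x =>
    if 10 < x then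
      prefWrite a valOn (.fix (Proc.ticks 5 (prefRead s (fun y =>
        if 10 < y then prefOut warningCh ID (.pvar 0)
        else prefWrite a valOff (.tick (.pvar 1))))))
    else .tick (.pvar 0)))

/-- The engine with cooling power `coolRate`. -/
def EngGen (coolRate : ℝ) : CPS := ⟨EngEnvN coolRate 0 0 0, CtrlN 0 0 0⟩

/-- The engine `Eng`. -/
def Eng : CPS := EngGen 1
/-- The variant engine `Enḡ` (heat = −0.8 when cooling). -/
def EngBar : CPS := EngGen 0.8
/-- The variant engine `Enĝ` (heat = −0.7 when cooling). -/
def EngHat : CPS := EngGen 0.7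

/-- Current temperature of an engine-like CPS (state variable named 0). -/
def CPS.temp (M : CPS) : ℝ :=
  if h : (0 : ℕ) ∈ M.env.X then M.env.xi_x ⟨0, h⟩ else 0

/-- Current value of the `cool` actuator of an engine-like CPS
(actuator named 0). -/
def CPS.cool (M : CPS) : ℝ :=
  if h : (0 : ℕ) ∈ M.env.A then M.env.xi_u ⟨0, h⟩ else 0

/-! ## The airplane case study -/

def idL : Val := 0
def idR : Val := 1

/-- `CheckAux id m` is `Check^id_(5-m)`; the free process variable 0 is the
recursion variable `X` of `Check`. -/
def CheckAux (id : Val) : ℕ → Proc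
  | 0 => .inp warningCh (fun z =>
           if z ≠ id then prefOut alarmCh 0 (.tick (.pvar 0))
           else prefOut failureCh id (.tick (.pvar 0)))
         (prefOut failureCh id (.pvar 0))
  | m+1 => .inp warningCh (fun y =>
           if y ≠ id then prefOut alarmCh 0 (.tick (.pvar 0))
           else .tick (CheckAux id m))
         (CheckAux id m)

/-- The monitoring process `Check`. -/
def Check : Proc :=
  .fix (.inp warningCh
    (fun x => if x = idL then CheckAux idL 4 else CheckAux idR 4)
    (.pvar 0))

/-- The left engine (identifier L, devices named 0). -/
def EngL (coolRate : ℝ) : CPS := ⟨EngEnvN coolRate 0 0 0, CtrlN idL 0 0⟩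
/-- The right engine (identifier R, devices named 1). -/
def EngR (coolRate : ℝ) : CPS := ⟨EngEnvN coolRate 1 1 1, CtrlN idR 1 1⟩

/-- `Airplane(r) = ((Eng_L ⊎ Eng_R) ‖ Check)∖warning` with cooling power r. -/
def AirplaneGen (coolRate : ℝ) : CPS :=
  ⟨(EngEnvN coolRate 0 0 0).disjUnion (EngEnvN coolRate 1 1 1),
   .res (.par (.par (CtrlN idL 0 0) (CtrlN idR 1 1)) Check) warningCh⟩

def Airplane : CPS := AirplaneGen 1
def AirplaneBar : CPS := AirplaneGen 0.8

end


/-! ## Auxiliary development for Proposition 3 -/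

section Aux
open Classical

/-- lift-lift commutation -/
theorem lift_lift (P : Proc) : ∀ m n, m ≤ n →
    Proc.lift m (Proc.lift n P) = Proc.lift (n+1) (Proc.lift m P) := by
  induction P with
  | nil => intro m n h; simp [Proc.lift]
  | pvar k =>
      intro m n h
      simp only [Proc.lift]
      by_cases h1 : k < n
      · by_cases h2 : k < m
        · simp [Proc.lift, h1, h2, Nat.lt_succ_of_lt h1, h2.trans_le h]
        · have : k + 1 < n + 1 := by omega
          simp [Proc.lift, h1, h2, this]
      · have h2 : ¬ k < m := by omega
        have h3 : ¬ k + 1 < m := by omega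
        have h4 : ¬ k + 1 < n + 1 := by omega
        simp [Proc.lift, h1, h2, h3, h4]
  | tick P ih => intro m n h; simp [Proc.lift, ih m n h]
  | par P Q ihP ihQ => intro m n h; simp [Proc.lift, ihP m n h, ihQ m n h]
  | out c v P Q ihP ihQ => intro m n h; simp [Proc.lift, ihP m n h, ihQ m n h]
  | inp c f Q ihf ihQ =>
      intro m n h; simp only [Proc.lift]
      refine congrArg₂ (Proc.inp c) (funext fun v => ihf v m n h) (ihQ m n h)
  | read s f Q ihf ihQ =>
      intro m n h; simp only [Proc.lift]
      refine congrArg₂ (Proc.read s) (funext fun v => ihf v m n h) (ihQ m n h)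
  | write a v P Q ihP ihQ => intro m n h; simp [Proc.lift, ihP m n h, ihQ m n h]
  | res P c ih => intro m n h; simp [Proc.lift, ih m n h]
  | fix P ih => intro m n h; simp [Proc.lift, ih (m+1) (n+1) (by omega)]

/-- substitution commutes with lifting -/
theorem subst_lift (P : Proc) : ∀ (R : Proc) (m n : ℕ), m ≤ n →
    Proc.subst (Proc.lift m P) (n+1) (Proc.lift m R) = Proc.lift m (Proc.subst P n R) := by
  induction P with
  | nil => intro R m n h; simp [Proc.lift, Proc.subst]
  | pvar k =>
      intro R m n h
      by_cases h1 : k < m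
      · have : k ≠ n + 1 := by omega
        have h2 : ¬ n + 1 < k := by omega
        have h3 : k ≠ n := by omega
        have h4 : ¬ n < k := by omega
        simp [Proc.lift, Proc.subst, h1, this, h2, h3, h4]
      · by_cases h3 : k = n
        · subst h3
          simp [Proc.lift, Proc.subst, h1]
        · by_cases h4 : n < k
          · have e1 : ¬ k + 1 = n + 1 := by omega
            have e2 : n + 1 < k + 1 := by omega
            have e3 : ¬ k - 1 < m := by omega
            simp [Proc.lift, Proc.subst, h1, h3, h4, e1, e2, e3]
            congr 1; omega
          · have e1 : ¬ k + 1 = n + 1 := by omega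
            have e2 : ¬ n + 1 < k + 1 := by omega
            simp [Proc.lift, Proc.subst, h1, h3, h4, e1, e2]
  | tick P ih => intro R m n h; simp [Proc.lift, Proc.subst, ih R m n h]
  | par P Q ihP ihQ => intro R m n h; simp [Proc.lift, Proc.subst, ihP R m n h, ihQ R m n h]
  | out c v P Q ihP ihQ => intro R m n h; simp [Proc.lift, Proc.subst, ihP R m n h, ihQ R m n h]
  | inp c f Q ihf ihQ =>
      intro R m n h; simp only [Proc.lift, Proc.subst]
      refine congrArg₂ (Proc.inp c) (funext fun v => ihf v R m n h) (ihQ R m n h)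
  | read s f Q ihf ihQ =>
      intro R m n h; simp only [Proc.lift, Proc.subst]
      refine congrArg₂ (Proc.read s) (funext fun v => ihf v R m n h) (ihQ R m n h)
  | write a v P Q ihP ihQ => intro R m n h; simp [Proc.lift, Proc.subst, ihP R m n h, ihQ R m n h]
  | res P c ih => intro R m n h; simp [Proc.lift, Proc.subst, ih R m n h]
  | fix P ih =>
      intro R m n h
      simp only [Proc.lift, Proc.subst]
      rw [lift_lift R 0 m (Nat.zero_le m), ih (Proc.lift 0 R) (m+1) (n+1) (by omega)]

/-- substituting a freshly lifted variable is the identity -/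
theorem subst_lift_cancel (P : Proc) : ∀ (R : Proc) (n : ℕ),
    Proc.subst (Proc.lift n P) n R = P := by
  induction P with
  | nil => intro R n; simp [Proc.lift, Proc.subst]
  | pvar k =>
      intro R n
      by_cases h1 : k < n
      · have : k ≠ n := by omega
        have h2 : ¬ n < k := by omega
        simp [Proc.lift, Proc.subst, h1, this, h2]
      · have e1 : ¬ k + 1 = n := by omega
        have e2 : n < k + 1 := by omega
        simp [Proc.lift, Proc.subst, h1, e1, e2]
  | tick P ih => intro R n; simp [Proc.lift, Proc.subst, ih]
  | par P Q ihP ihQ => intro R n; simp [Proc.lift, Proc.subst, ihP, ihQ]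
  | out c v P Q ihP ihQ => intro R n; simp [Proc.lift, Proc.subst, ihP, ihQ]
  | inp c f Q ihf ihQ =>
      intro R n; simp only [Proc.lift, Proc.subst]
      refine congrArg₂ (Proc.inp c) (funext fun v => ihf v R n) (ihQ R n)
  | read s f Q ihf ihQ =>
      intro R n; simp only [Proc.lift, Proc.subst]
      refine congrArg₂ (Proc.read s) (funext fun v => ihf v R n) (ihQ R n)
  | write a v P Q ihP ihQ => intro R n; simp [Proc.lift, Proc.subst, ihP, ihQ]
  | res P c ih => intro R n; simp [Proc.lift, Proc.subst, ih]
  | fix P ih => intro R n; simp [Proc.lift, Proc.subst, ih]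

theorem closed_mono {d d' : ℕ} {P : Proc} (h : ClosedAbove d P) (hd : d ≤ d') :
    ClosedAbove d' P := by
  induction h generalizing d' with
  | nil => exact .nil
  | pvar h => exact .pvar (by omega)
  | tick _ ih => exact .tick (ih hd)
  | par _ _ ihP ihQ => exact .par (ihP hd) (ihQ hd)
  | out _ _ ihP ihQ => exact .out (ihP hd) (ihQ hd)
  | inp _ _ ihf ihQ => exact .inp (fun v => ihf v hd) (ihQ hd)
  | read _ _ ihf ihQ => exact .read (fun v => ihf v hd) (ihQ hd)
  | write _ _ ihP ihQ => exact .write (ihP hd) (ihQ hd)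
  | res _ ih => exact .res (ih hd)
  | fix _ ih => exact .fix (ih (by omega))

theorem lift_closed {d : ℕ} {P : Proc} (h : ClosedAbove d P) : Proc.lift d P = P := by
  induction h with
  | nil => rfl
  | pvar h => simp [Proc.lift, h]
  | tick _ ih => simp [Proc.lift, ih]
  | par _ _ ihP ihQ => simp [Proc.lift, ihP, ihQ]
  | out _ _ ihP ihQ => simp [Proc.lift, ihP, ihQ]
  | inp _ _ ihf ihQ => simp only [Proc.lift]; exact congrArg₂ _ (funext fun v => ihf v) ihQ
  | read _ _ ihf ihQ => simp only [Proc.lift]; exact congrArg₂ _ (funext fun v => ihf v) ihQ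
  | write _ _ ihP ihQ => simp [Proc.lift, ihP, ihQ]
  | res _ ih => simp [Proc.lift, ih]
  | fix _ ih => simp [Proc.lift, ih]

theorem subst_closed {d : ℕ} {P : Proc} (h : ClosedAbove d P) :
    ∀ (n : ℕ) (R : Proc), d ≤ n → Proc.subst P n R = P := by
  induction h with
  | nil => intros; rfl
  | @pvar m d h =>
      intro n R hd
      have e1 : ¬ m = n := by omega
      have e2 : ¬ n < m := by omega
      simp [Proc.subst, e1, e2]
  | tick _ ih => intro n R hd; simp [Proc.subst, ih n R hd]
  | par _ _ ihP ihQ => intro n R hd; simp [Proc.subst, ihP n R hd, ihQ n R hd]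
  | out _ _ ihP ihQ => intro n R hd; simp [Proc.subst, ihP n R hd, ihQ n R hd]
  | inp _ _ ihf ihQ =>
      intro n R hd; simp only [Proc.subst]
      exact congrArg₂ _ (funext fun v => ihf v n R hd) (ihQ n R hd)
  | read _ _ ihf ihQ =>
      intro n R hd; simp only [Proc.subst]
      exact congrArg₂ _ (funext fun v => ihf v n R hd) (ihQ n R hd)
  | write _ _ ihP ihQ => intro n R hd; simp [Proc.subst, ihP n R hd, ihQ n R hd]
  | res _ ih => intro n R hd; simp [Proc.subst, ih n R hd]
  | fix _ ih => intro n R hd; simp [Proc.subst, ih (n+1) _ (by omega)]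

theorem closed_lift {d c : ℕ} {P : Proc} (h : ClosedAbove d P) (hc : c ≤ d) :
    ClosedAbove (d+1) (Proc.lift c P) := by
  induction h generalizing c with
  | nil => exact .nil
  | pvar h =>
      simp only [Proc.lift]
      split
      · exact .pvar (by omega)
      · exact .pvar (by omega)
  | tick _ ih => exact .tick (ih hc)
  | par _ _ ihP ihQ => exact .par (ihP hc) (ihQ hc)
  | out _ _ ihP ihQ => exact .out (ihP hc) (ihQ hc)
  | inp _ _ ihf ihQ => exact .inp (fun v => ihf v hc) (ihQ hc)
  | read _ _ ihf ihQ => exact .read (fun v => ihf v hc) (ihQ hc)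
  | write _ _ ihP ihQ => exact .write (ihP hc) (ihQ hc)
  | res _ ih => exact .res (ih hc)
  | fix _ ih => exact .fix (ih (by omega))

end Aux

/-! ### Substitution through the derived prefixes -/

theorem subst_pvar0 (n : ℕ) (R : Proc) : Proc.subst (.pvar 0) (n+1) R = .pvar 0 := by
  simp [Proc.subst]

theorem subst_prefRead (s : SensName) (f : Val → Proc) (n : ℕ) (R : Proc) :
    Proc.subst (prefRead s f) n R = prefRead s (fun v => Proc.subst (f v) n R) := by
  simp only [prefRead, Proc.subst, subst_pvar0]
  exact congrArg Proc.fix (congrArg₂ (fun g Q => Proc.read s g Q)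
    (funext fun v => subst_lift (f v) R 0 n (Nat.zero_le n)) rfl)

theorem subst_prefWrite (a : ActName) (w : Val) (P : Proc) (n : ℕ) (R : Proc) :
    Proc.subst (prefWrite a w P) n R = prefWrite a w (Proc.subst P n R) := by
  simp only [prefWrite, Proc.subst, subst_pvar0]
  rw [subst_lift P R 0 n (Nat.zero_le n)]
  simp

theorem subst_prefOut (c : Chan) (w : Val) (P : Proc) (n : ℕ) (R : Proc) :
    Proc.subst (prefOut c w P) n R = prefOut c w (Proc.subst P n R) := by
  simp only [prefOut, Proc.subst, subst_pvar0]
  rw [subst_lift P R 0 n (Nat.zero_le n)]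
  simp

theorem subst_ticks (k : ℕ) (P : Proc) (n : ℕ) (R : Proc) :
    Proc.subst (Proc.ticks k P) n R = Proc.ticks k (Proc.subst P n R) := by
  induction k with
  | zero => rfl
  | succ k ih => simp [Proc.ticks, Proc.subst, ih]

/-- generic unfolding of a persistent read prefix -/
theorem unfold_prefRead (s : SensName) (f : Val → Proc) :
    Proc.unfold (.read s (fun v => Proc.lift 0 (f v)) (.pvar 0)) =
      .read s f (prefRead s f) := by
  simp only [Proc.unfold, Proc.subst]
  refine congrArg₂ (fun g Q => Proc.read s g Q) (funext fun v => subst_lift_cancel (f v) _ 0) rfl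

theorem unfold_prefWrite (a : ActName) (w : Val) (P : Proc) :
    Proc.unfold (.write a w (Proc.lift 0 P) (.pvar 0)) =
      .write a w P (prefWrite a w P) := by
  simp only [Proc.unfold, Proc.subst]
  rw [subst_lift_cancel P _ 0]
  simp [prefWrite]

/-! ### The concrete control states of the engine controller -/

noncomputable section EngineStates
open Classical

/-- the controller -/
abbrev Ctl : Proc := CtrlN 0 0 0

def bodyC : Proc :=
  prefRead 0 (fun x =>
    if 10 < x then
      prefWrite 0 valOn (.fix (Proc.ticks 5 (prefRead 0 (fun y =>
        if 10 < y then prefOut warningCh 0 (.pvar 0)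
        else prefWrite 0 valOff (.tick (.pvar 1))))))
    else .tick (.pvar 0))

theorem Ctl_eq : Ctl = .fix bodyC := rfl

/-- the body of the cooling recursion (with the outer variable already resolved) -/
def hbP : Val → Proc := fun y =>
  if 10 < y then prefOut warningCh 0 (.pvar 0)
  else prefWrite 0 valOff (.tick Ctl)

def bodyK : Proc := Proc.ticks 5 (prefRead 0 hbP)

/-- the cooling recursion `fix Y. tick⁵. …` -/
def KK : Proc := .fix bodyK

/-- `Cooling` -/
def CoolW : Proc := prefWrite 0 valOn KK

def gP : Val → Proc := fun v => if 10 < v then CoolW else .tick Ctl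

def c5P : Proc := prefWrite 0 valOff (.tick Ctl)

def hE : Val → Proc := fun y =>
  if 10 < y then prefOut warningCh 0 KK else c5P

/-- the read state at the end of the cooling phase -/
def RE : Proc := prefRead 0 hE

/-! ### Closedness facts -/

theorem closed_prefRead {d : ℕ} {s : SensName} {f : Val → Proc}
    (h : ∀ v, ClosedAbove d (f v)) : ClosedAbove d (prefRead s f) :=
  .fix (.read (fun v => closed_lift (h v) (Nat.zero_le d)) (.pvar (by omega)))

theorem closed_prefWrite {d : ℕ} {a : ActName} {w : Val} {P : Proc}
    (h : ClosedAbove d P) : ClosedAbove d (prefWrite a w P) :=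
  .fix (.write (closed_lift h (Nat.zero_le d)) (.pvar (by omega)))

theorem closed_prefOut {d : ℕ} {c : Chan} {w : Val} {P : Proc}
    (h : ClosedAbove d P) : ClosedAbove d (prefOut c w P) :=
  .fix (.out (closed_lift h (Nat.zero_le d)) (.pvar (by omega)))

theorem closed_ticks {d : ℕ} {P : Proc} (k : ℕ) (h : ClosedAbove d P) :
    ClosedAbove d (Proc.ticks k P) := by
  induction k with
  | zero => exact h
  | succ k ih => exact .tick ih

theorem closed_Ctl : ClosedAbove 0 Ctl := by
  rw [Ctl_eq]; unfold bodyC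
  refine .fix (closed_prefRead fun v => ?_)
  split
  · refine closed_prefWrite (.fix (closed_ticks 5 (closed_prefRead fun y => ?_)))
    split
    · exact closed_prefOut (.pvar (by omega))
    · exact closed_prefWrite (.tick (.pvar (by omega)))
  · exact .tick (.pvar (by omega))

theorem closed_c5P : ClosedAbove 0 c5P :=
  closed_prefWrite (.tick (closed_mono closed_Ctl (by omega)))

theorem closed_KK : ClosedAbove 0 KK := by
  refine .fix (closed_ticks 5 (closed_prefRead fun y => ?_))
  unfold hbP
  split
  · exact closed_prefOut (.pvar (by omega))
  · exact closed_mono closed_c5P (by omega)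

/-! ### Unfolding equations -/

theorem subst_fix (P : Proc) (n : ℕ) (R : Proc) :
    Proc.subst (.fix P) n R = .fix (Proc.subst P (n+1) (Proc.lift 0 R)) := rfl

theorem unfold_bodyC : Proc.unfold bodyC = prefRead 0 gP := by
  have hC : Proc.lift 0 Ctl = Ctl := lift_closed closed_Ctl
  show Proc.subst bodyC 0 (.fix bodyC) = _
  rw [← Ctl_eq]
  conv_lhs => rw [bodyC]
  rw [subst_prefRead]
  unfold gP
  refine congrArg (prefRead 0) (funext fun v => ?_)
  by_cases h : 10 < v
  · rw [if_pos h, if_pos h, subst_prefWrite]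
    unfold CoolW KK bodyK
    refine congrArg (prefWrite 0 valOn) ?_
    rw [subst_fix, hC, subst_ticks, subst_prefRead]
    refine congrArg (fun X => Proc.fix (Proc.ticks 5 (prefRead 0 X))) (funext fun y => ?_)
    unfold hbP
    by_cases hy : 10 < y
    · rw [if_pos hy, if_pos hy, subst_prefOut, subst_pvar0]
    · rw [if_neg hy, if_neg hy, subst_prefWrite]
      simp [Proc.subst]
  · rw [if_neg h, if_neg h]
    simp [Proc.subst]

theorem unfold_bodyK : Proc.unfold bodyK = Proc.ticks 5 RE := by
  show Proc.subst bodyK 0 (.fix bodyK) = _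
  rw [show Proc.fix bodyK = KK from rfl]
  conv_lhs => rw [bodyK]
  rw [subst_ticks, subst_prefRead]
  unfold RE
  refine congrArg (fun X => Proc.ticks 5 (prefRead 0 X)) (funext fun y => ?_)
  unfold hbP hE
  by_cases hy : 10 < y
  · rw [if_pos hy, if_pos hy, subst_prefOut]
    simp [Proc.subst]
  · rw [if_neg hy, if_neg hy]
    exact subst_closed closed_c5P 0 KK (le_refl 0)

/-! ### Transition lemmas for the control states -/

theorem ustep_prefRead {s : SensName} {f : Val → Proc} {l : Label} {Q : Proc}
    (h : UStep (prefRead s f) l Q) : ∃ v, l = .read s v ∧ Q = f v := by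
  cases h with
  | unfold h =>
    rw [unfold_prefRead] at h
    cases h with
    | read => exact ⟨_, rfl, rfl⟩

theorem ustep_prefWrite {a : ActName} {w : Val} {P : Proc} {l : Label} {Q : Proc}
    (h : UStep (prefWrite a w P) l Q) : l = .write a w ∧ Q = P := by
  cases h with
  | unfold h =>
    rw [unfold_prefWrite] at h
    cases h with
    | write => exact ⟨rfl, rfl⟩

theorem ustep_Ctl {l : Label} {Q : Proc} (h : UStep Ctl l Q) :
    ∃ v, l = .read (0:ℕ) v ∧ Q = gP v := by
  rw [Ctl_eq] at h
  cases h with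
  | unfold h =>
    rw [unfold_bodyC] at h
    exact ustep_prefRead (by rw [show prefRead 0 gP = Proc.fix
      (.read 0 (fun v => Proc.lift 0 (gP v)) (.pvar 0)) from rfl] at h ⊢; exact h)

theorem ustep_tick' {P : Proc} {l : Label} {Q : Proc} (h : UStep (.tick P) l Q) : False :=
  nomatch h

theorem ustep_KK {l : Label} {Q : Proc} (h : UStep KK l Q) : False := by
  rw [show KK = Proc.fix bodyK from rfl] at h
  cases h with
  | unfold h =>
    rw [unfold_bodyK] at h
    exact nomatch h

theorem tstep_tick' {P Q : Proc} (h : TStep (.tick P) Q) : Q = P := by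
  cases h; rfl

theorem tstep_KK {Q : Proc} (h : TStep KK Q) : Q = Proc.ticks 4 RE := by
  rw [show KK = Proc.fix bodyK from rfl] at h
  cases h with
  | unfold h =>
    rw [unfold_bodyK] at h
    exact tstep_tick' h

theorem ustep_Ctl_read (v : Val) : UStep Ctl (.read 0 v) (gP v) := by
  rw [Ctl_eq]
  apply UStep.unfold
  rw [unfold_bodyC, show prefRead 0 gP = Proc.fix
      (.read 0 (fun v => Proc.lift 0 (gP v)) (.pvar 0)) from rfl]
  apply UStep.unfold
  rw [unfold_prefRead]
  exact .read

theorem ustep_prefWrite_write (a : ActName) (w : Val) (P : Proc) :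
    UStep (prefWrite a w P) (.write a w) P := by
  rw [show prefWrite a w P = Proc.fix (.write a w (Proc.lift 0 P) (.pvar 0)) from rfl]
  apply UStep.unfold
  rw [unfold_prefWrite]
  exact .write

theorem ustep_RE {l : Label} {Q : Proc} (h : UStep RE l Q) :
    ∃ v, l = .read (0:ℕ) v ∧ Q = hE v := ustep_prefRead h

theorem ustep_RE_read (v : Val) : UStep RE (.read 0 v) (hE v) := by
  rw [show RE = Proc.fix (.read 0 (fun v => Proc.lift 0 (hE v)) (.pvar 0)) from rfl]
  apply UStep.unfold
  rw [unfold_prefRead]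
  exact .read

theorem tstep_KK_intro : TStep KK (Proc.ticks 4 RE) := by
  rw [show KK = Proc.fix bodyK from rfl]
  apply TStep.unfold
  rw [unfold_bodyK]
  exact .delay

/-! ### The engine environments -/

/-- engine environment with cooling power `r`, temperature `t` and actuator value `u` -/
def Eenv (r t u : ℝ) : Env :=
  { EngEnvN r 0 0 0 with xi_x := fun _ => t, xi_u := fun _ => u }

theorem Eenv_init (r : ℝ) : EngEnvN r 0 0 0 = Eenv r 0 valOff := rfl

theorem mem01 : (0:ℕ) ∈ ({0} : Finset ℕ) := Finset.mem_singleton_self 0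

theorem invHolds_Eenv {r t u : ℝ} : invHolds (Eenv r t u) ↔ 0 ≤ t ∧ t ≤ 30 := by
  constructor
  · intro h; exact h ⟨0, mem01⟩
  · intro h _; exact h

theorem engHeat_off (r : ℝ) : engHeat r valOff = 1 := by norm_num [engHeat, valOff]

theorem engHeat_on (r : ℝ) : engHeat r valOn = -r := by norm_num [engHeat, valOn]

theorem mem_readSensor_Eenv {r t u v : ℝ} :
    v ∈ readSensor (Eenv r t u) 0 ↔ t - 0.1 ≤ v ∧ v ≤ t + 0.1 := by
  constructor
  · rintro ⟨h, ξ, hξ, rfl⟩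
    have h2 := hξ ⟨0, h⟩ ⟨0, mem01⟩
    simp only [Set.mem_Icc, Eenv, EngEnvN] at h2
    norm_num [engEps] at h2
    rw [show (0.1:ℝ) = 1/10 by norm_num]
    exact ⟨sub_le_iff_le_add.2 h2.1, h2.2⟩
  · intro hv
    refine ⟨mem01, fun _ => v, fun t' y => ?_, rfl⟩
    simp only [Set.mem_Icc, Eenv, EngEnvN]
    norm_num [engEps]
    constructor <;> linarith [hv.1, hv.2]

theorem updateAct_Eenv {r t u : ℝ} (v : ℝ) : updateAct (Eenv r t u) 0 v = Eenv r t v := by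
  unfold updateAct Eenv EngEnvN
  congr 1
  funext b
  have : (b : ℕ) = 0 := Finset.mem_singleton.mp b.2
  simp [this]

theorem mem_nextEnv_Eenv {r t u : ℝ} {E' : Env} :
    E' ∈ nextEnv (Eenv r t u) ↔
      ∃ γ : ℝ, -(0.4:ℝ) ≤ γ ∧ γ ≤ 0.4 ∧ E' = Eenv r (t + engHeat r u + γ) u := by
  constructor
  · rintro ⟨ξ, ⟨γ, hγ, hξ⟩, rfl⟩
    rw [Set.mem_Icc] at hγ
    norm_num [engDelta] at hγ
    refine ⟨γ, by linarith [hγ.1], by linarith [hγ.2], ?_⟩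
    have hfun : ξ = fun _ => t + engHeat r u + γ := funext fun y => hξ y ⟨0, mem01⟩
    rw [hfun]
    rfl
  · rintro ⟨γ, h1, h2, rfl⟩
    refine ⟨fun _ => t + engHeat r u + γ, ⟨γ, Set.mem_Icc.2 ⟨by norm_num [engDelta]; linarith,
      by norm_num [engDelta]; linarith⟩, fun y u' => rfl⟩, rfl⟩

/-! ### The reachability invariant -/

/-- invariant set of configurations of the engine with cooling power `r` -/
def InvP (r : ℝ) (M : CPS) : Prop :=
  ∃ t : ℝ,
    (M = ⟨Eenv r t valOff, Ctl⟩ ∧ 0 ≤ t ∧ t ≤ 11.5) ∨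
    (M = ⟨Eenv r t valOff, .tick Ctl⟩ ∧ 0 ≤ t ∧ t ≤ 10.1) ∨
    (M = ⟨Eenv r t valOff, CoolW⟩ ∧ 9.9 ≤ t ∧ t ≤ 11.5) ∨
    (M = ⟨Eenv r t valOn, KK⟩ ∧ 9.9 ≤ t ∧ t ≤ 11.5) ∨
    (M = ⟨Eenv r t valOn, Proc.ticks 4 RE⟩ ∧ 8.5 ≤ t ∧ t ≤ 11.1) ∨
    (M = ⟨Eenv r t valOn, Proc.ticks 3 RE⟩ ∧ 7.1 ≤ t ∧ t ≤ 10.7) ∨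
    (M = ⟨Eenv r t valOn, Proc.ticks 2 RE⟩ ∧ 5.7 ≤ t ∧ t ≤ 10.3) ∨
    (M = ⟨Eenv r t valOn, Proc.ticks 1 RE⟩ ∧ 4.3 ≤ t ∧ t ≤ 9.9) ∨
    (M = ⟨Eenv r t valOn, RE⟩ ∧ 2.9 ≤ t ∧ t ≤ 9.5) ∨
    (M = ⟨Eenv r t valOn, c5P⟩ ∧ 2.9 ≤ t ∧ t ≤ 9.5)

theorem noTau_tick {E : Env} {P : Proc} {N' : CPS} : ¬ CStepU ⟨E, .tick P⟩ .tau N' := by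
  intro h
  cases h with
  | sensRead hu _ _ => exact ustep_tick' hu
  | actWrite hu _ => exact ustep_tick' hu
  | tau hu _ => exact ustep_tick' hu

theorem noTau_KK {E : Env} {N' : CPS} : ¬ CStepU ⟨E, KK⟩ .tau N' := by
  intro h
  cases h with
  | sensRead hu _ _ => exact ustep_KK hu
  | actWrite hu _ => exact ustep_KK hu
  | tau hu _ => exact ustep_KK hu

/-- full analysis of transitions from a `tick`-guarded state -/
theorem step_tick_state {r t u : ℝ} {P : Proc} {α : Label} {M' : CPS}
    (hs : CStep ⟨Eenv r t u, .tick P⟩ α M') :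
    α = .tick ∧ ∃ γ : ℝ, -(0.4:ℝ) ≤ γ ∧ γ ≤ 0.4 ∧
      M' = ⟨Eenv r (t + engHeat r u + γ) u, P⟩ := by
  cases α with
  | tick =>
      obtain ⟨hT, _, _, hn⟩ := hs
      obtain ⟨γ, h1, h2, he⟩ := mem_nextEnv_Eenv.1 hn
      obtain ⟨E', P'⟩ := M'
      refine ⟨rfl, γ, h1, h2, ?_⟩
      simp only at hT he
      rw [tstep_tick' hT, he]
  | tau =>
      cases hs with
      | sensRead hu _ _ => exact (ustep_tick' hu).elim
      | actWrite hu _ => exact (ustep_tick' hu).elim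
      | tau hu _ => exact (ustep_tick' hu).elim
  | out c v => cases hs with | out hu _ => exact (ustep_tick' hu).elim
  | inp c v => cases hs with | inp hu _ => exact (ustep_tick' hu).elim
  | write a v => cases hs
  | read s v => cases hs

/-- full analysis of transitions from the cooling recursion `KK` -/
theorem step_KK_state {r t u : ℝ} {α : Label} {M' : CPS}
    (hs : CStep ⟨Eenv r t u, KK⟩ α M') :
    α = .tick ∧ ∃ γ : ℝ, -(0.4:ℝ) ≤ γ ∧ γ ≤ 0.4 ∧
      M' = ⟨Eenv r (t + engHeat r u + γ) u, Proc.ticks 4 RE⟩ := by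
  cases α with
  | tick =>
      obtain ⟨hT, _, _, hn⟩ := hs
      obtain ⟨γ, h1, h2, he⟩ := mem_nextEnv_Eenv.1 hn
      obtain ⟨E', P'⟩ := M'
      refine ⟨rfl, γ, h1, h2, ?_⟩
      simp only at hT he
      rw [tstep_KK hT, he]
  | tau =>
      cases hs with
      | sensRead hu _ _ => exact (ustep_KK hu).elim
      | actWrite hu _ => exact (ustep_KK hu).elim
      | tau hu _ => exact (ustep_KK hu).elim
  | out c v => cases hs with | out hu _ => exact (ustep_KK hu).elim
  | inp c v => cases hs with | inp hu _ => exact (ustep_KK hu).elim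
  | write a v => cases hs
  | read s v => cases hs

/-- closure of the invariant under CPS transitions -/
theorem InvP_closed {r : ℝ} (hr : 0.8 ≤ r) (hr' : r ≤ 1) {M M' : CPS} {α : Label}
    (h : InvP r M) (hs : CStep M α M') :
    InvP r M' ∧ (α = .tau ∨ α = .tick) := by
  obtain ⟨t, h⟩ := h
  rcases h with ⟨rfl, h1, h2⟩ | ⟨rfl, h1, h2⟩ | ⟨rfl, h1, h2⟩ | ⟨rfl, h1, h2⟩ |
    ⟨rfl, h1, h2⟩ | ⟨rfl, h1, h2⟩ | ⟨rfl, h1, h2⟩ | ⟨rfl, h1, h2⟩ |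
    ⟨rfl, h1, h2⟩ | ⟨rfl, h1, h2⟩
  -- state c0 : the main read loop
  · cases α with
    | tick =>
        obtain ⟨_, hnt, _, _⟩ := hs
        exact absurd (CStepU.sensRead (ustep_Ctl_read t)
          (invHolds_Eenv.2 ⟨by linarith, by linarith⟩)
          (mem_readSensor_Eenv.2 ⟨by linarith, by linarith⟩)) (hnt _)
    | tau =>
        cases hs with
        | sensRead hu hi hv =>
            obtain ⟨v', hl, rfl⟩ := ustep_Ctl hu
            injection hl with hls hlv
            subst hls
            rw [mem_readSensor_Eenv] at hv
            rw [hlv] at hv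
            refine ⟨⟨t, ?_⟩, Or.inl rfl⟩
            by_cases h10 : 10 < v'
            · refine Or.inr (Or.inr (Or.inl ⟨?_, by linarith [hv.2], h2⟩))
              simp [gP, h10]
            · refine Or.inr (Or.inl ⟨?_, h1, by linarith [hv.1, not_lt.1 h10]⟩)
              simp [gP, h10]
        | actWrite hu _ =>
            obtain ⟨v', hl, _⟩ := ustep_Ctl hu
            exact absurd hl (by simp)
        | tau hu _ =>
            obtain ⟨v', hl, _⟩ := ustep_Ctl hu
            exact absurd hl (by simp)
    | out c v =>
        cases hs with
        | out hu _ => obtain ⟨v', hl, _⟩ := ustep_Ctl hu; exact absurd hl (by simp)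
    | inp c v =>
        cases hs with
        | inp hu _ => obtain ⟨v', hl, _⟩ := ustep_Ctl hu; exact absurd hl (by simp)
    | write a v => cases hs
    | read s v => cases hs
  -- state c1 : tick before re-reading, heating
  · obtain ⟨rfl, γ, hg1, hg2, rfl⟩ := step_tick_state hs
    rw [engHeat_off]
    exact ⟨⟨t + 1 + γ, Or.inl ⟨rfl, by linarith, by linarith⟩⟩, Or.inr rfl⟩
  -- state c2 : about to switch cooling on
  · cases α with
    | tick =>
        obtain ⟨_, hnt, _, _⟩ := hs
        exact absurd (CStepU.actWrite (ustep_prefWrite_write 0 valOn KK)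
          (invHolds_Eenv.2 ⟨by linarith, by linarith⟩)) (hnt _)
    | tau =>
        cases hs with
        | sensRead hu _ _ =>
            obtain ⟨hl, _⟩ := ustep_prefWrite hu; exact absurd hl (by simp)
        | actWrite hu _ =>
            obtain ⟨hl, rfl⟩ := ustep_prefWrite hu
            injection hl with hla hlv
            subst hla; subst hlv
            rw [updateAct_Eenv]
            exact ⟨⟨t, Or.inr (Or.inr (Or.inr (Or.inl ⟨rfl, h1, h2⟩)))⟩, Or.inl rfl⟩
        | tau hu _ =>
            obtain ⟨hl, _⟩ := ustep_prefWrite hu; exact absurd hl (by simp)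
    | out c v =>
        cases hs with
        | out hu _ => obtain ⟨hl, _⟩ := ustep_prefWrite hu; exact absurd hl (by simp)
    | inp c v =>
        cases hs with
        | inp hu _ => obtain ⟨hl, _⟩ := ustep_prefWrite hu; exact absurd hl (by simp)
    | write a v => cases hs
    | read s v => cases hs
  -- state KK : 5 cooling ticks pending
  · obtain ⟨rfl, γ, hg1, hg2, rfl⟩ := step_KK_state hs
    rw [engHeat_on]
    refine ⟨⟨t + -r + γ, Or.inr (Or.inr (Or.inr (Or.inr (Or.inl
      ⟨rfl, by linarith, by linarith⟩))))⟩, Or.inr rfl⟩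
  -- states ticks 4..1 RE
  · obtain ⟨rfl, γ, hg1, hg2, rfl⟩ := step_tick_state hs
    rw [engHeat_on]
    refine ⟨⟨t + -r + γ, Or.inr (Or.inr (Or.inr (Or.inr (Or.inr (Or.inl
      ⟨rfl, by linarith, by linarith⟩)))))⟩, Or.inr rfl⟩
  · obtain ⟨rfl, γ, hg1, hg2, rfl⟩ := step_tick_state hs
    rw [engHeat_on]
    refine ⟨⟨t + -r + γ, Or.inr (Or.inr (Or.inr (Or.inr (Or.inr (Or.inr (Or.inl
      ⟨rfl, by linarith, by linarith⟩))))))⟩, Or.inr rfl⟩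
  · obtain ⟨rfl, γ, hg1, hg2, rfl⟩ := step_tick_state hs
    rw [engHeat_on]
    refine ⟨⟨t + -r + γ, Or.inr (Or.inr (Or.inr (Or.inr (Or.inr (Or.inr (Or.inr (Or.inl
      ⟨rfl, by linarith, by linarith⟩)))))))⟩, Or.inr rfl⟩
  · obtain ⟨rfl, γ, hg1, hg2, rfl⟩ := step_tick_state hs
    rw [engHeat_on]
    refine ⟨⟨t + -r + γ, Or.inr (Or.inr (Or.inr (Or.inr (Or.inr (Or.inr (Or.inr (Or.inr (Or.inl
      ⟨rfl, by linarith, by linarith⟩))))))))⟩, Or.inr rfl⟩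
  -- state RE : reading at the end of the cooling phase
  · cases α with
    | tick =>
        obtain ⟨_, hnt, _, _⟩ := hs
        exact absurd (CStepU.sensRead (ustep_RE_read t)
          (invHolds_Eenv.2 ⟨by linarith, by linarith⟩)
          (mem_readSensor_Eenv.2 ⟨by linarith, by linarith⟩)) (hnt _)
    | tau =>
        cases hs with
        | sensRead hu hi hv =>
            obtain ⟨v', hl, rfl⟩ := ustep_RE hu
            injection hl with hls hlv
            subst hls
            rw [mem_readSensor_Eenv] at hv
            rw [hlv] at hv
            have h10 : ¬ 10 < v' := by linarith [hv.2]
            refine ⟨⟨t, Or.inr (Or.inr (Or.inr (Or.inr (Or.inr (Or.inr (Or.inr (Or.inr (Or.inr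
              ⟨?_, h1, h2⟩))))))))⟩, Or.inl rfl⟩
            simp [hE, h10]
        | actWrite hu _ =>
            obtain ⟨v', hl, _⟩ := ustep_RE hu; exact absurd hl (by simp)
        | tau hu _ =>
            obtain ⟨v', hl, _⟩ := ustep_RE hu; exact absurd hl (by simp)
    | out c v =>
        cases hs with
        | out hu _ => obtain ⟨v', hl, _⟩ := ustep_RE hu; exact absurd hl (by simp)
    | inp c v =>
        cases hs with
        | inp hu _ => obtain ⟨v', hl, _⟩ := ustep_RE hu; exact absurd hl (by simp)
    | write a v => cases hs
    | read s v => cases hs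
  -- state c5 : about to switch cooling off
  · cases α with
    | tick =>
        obtain ⟨_, hnt, _, _⟩ := hs
        exact absurd (CStepU.actWrite (ustep_prefWrite_write 0 valOff (.tick Ctl))
          (invHolds_Eenv.2 ⟨by linarith, by linarith⟩)) (hnt _)
    | tau =>
        cases hs with
        | sensRead hu _ _ =>
            obtain ⟨hl, _⟩ := ustep_prefWrite hu; exact absurd hl (by simp)
        | actWrite hu _ =>
            obtain ⟨hl, rfl⟩ := ustep_prefWrite hu
            injection hl with hla hlv
            subst hla; subst hlv
            rw [updateAct_Eenv]
            exact ⟨⟨t, Or.inr (Or.inl ⟨rfl, by linarith, by linarith⟩)⟩, Or.inl rfl⟩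
        | tau hu _ =>
            obtain ⟨hl, _⟩ := ustep_prefWrite hu; exact absurd hl (by simp)
    | out c v =>
        cases hs with
        | out hu _ => obtain ⟨hl, _⟩ := ustep_prefWrite hu; exact absurd hl (by simp)
    | inp c v =>
        cases hs with
        | inp hu _ => obtain ⟨hl, _⟩ := ustep_prefWrite hu; exact absurd hl (by simp)
    | write a v => cases hs
    | read s v => cases hs

/-! ### Weak availability of `tick` -/

theorem mkTick_tick {r t u : ℝ} {P : Proc} (h0 : 0 ≤ t) (h30 : t ≤ 30) :
    CStep ⟨Eenv r t u, .tick P⟩ .tick ⟨Eenv r (t + engHeat r u + 0) u, P⟩ :=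
  ⟨.delay, fun _ => noTau_tick, invHolds_Eenv.2 ⟨h0, h30⟩,
   mem_nextEnv_Eenv.2 ⟨0, by norm_num, by norm_num, rfl⟩⟩

theorem mkTick_KK {r t u : ℝ} (h0 : 0 ≤ t) (h30 : t ≤ 30) :
    CStep ⟨Eenv r t u, KK⟩ .tick ⟨Eenv r (t + engHeat r u + 0) u, Proc.ticks 4 RE⟩ :=
  ⟨tstep_KK_intro, fun _ => noTau_KK, invHolds_Eenv.2 ⟨h0, h30⟩,
   mem_nextEnv_Eenv.2 ⟨0, by norm_num, by norm_num, rfl⟩⟩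

theorem InvP_weakTick {r : ℝ} {N : CPS} (h : InvP r N) :
    ∃ N₁ N₂, WeakTau N N₁ ∧ CStep N₁ .tick N₂ := by
  obtain ⟨t, h⟩ := h
  rcases h with ⟨rfl, h1, h2⟩ | ⟨rfl, h1, h2⟩ | ⟨rfl, h1, h2⟩ | ⟨rfl, h1, h2⟩ |
    ⟨rfl, h1, h2⟩ | ⟨rfl, h1, h2⟩ | ⟨rfl, h1, h2⟩ | ⟨rfl, h1, h2⟩ |
    ⟨rfl, h1, h2⟩ | ⟨rfl, h1, h2⟩
  -- c0
  · have hinv : invHolds (Eenv r t valOff) := invHolds_Eenv.2 ⟨by linarith, by linarith⟩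
    have hmem : t ∈ readSensor (Eenv r t valOff) 0 :=
      mem_readSensor_Eenv.2 ⟨by linarith, by linarith⟩
    by_cases h10 : 10 < t
    · have step1 : TauStep ⟨Eenv r t valOff, Ctl⟩ ⟨Eenv r t valOff, CoolW⟩ := by
        have := CStepU.sensRead (ustep_Ctl_read t) hinv hmem
        rwa [show gP t = CoolW by simp [gP, h10]] at this
      have step2 : TauStep ⟨Eenv r t valOff, CoolW⟩ ⟨Eenv r t valOn, KK⟩ := by
        have := CStepU.actWrite (ustep_prefWrite_write 0 valOn KK) hinv
        rwa [updateAct_Eenv] at this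
      exact ⟨⟨Eenv r t valOn, KK⟩, _,
        (Relation.ReflTransGen.single step1).tail step2,
        mkTick_KK (by linarith) (by linarith)⟩
    · have step1 : TauStep ⟨Eenv r t valOff, Ctl⟩ ⟨Eenv r t valOff, .tick Ctl⟩ := by
        have := CStepU.sensRead (ustep_Ctl_read t) hinv hmem
        rwa [show gP t = .tick Ctl by simp [gP, h10]] at this
      exact ⟨⟨Eenv r t valOff, .tick Ctl⟩, _, Relation.ReflTransGen.single step1,
        mkTick_tick (by linarith) (by linarith)⟩
  -- c1
  · exact ⟨_, _, Relation.ReflTransGen.refl, mkTick_tick (by linarith) (by linarith)⟩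
  -- c2
  · have hinv : invHolds (Eenv r t valOff) := invHolds_Eenv.2 ⟨by linarith, by linarith⟩
    have step2 : TauStep ⟨Eenv r t valOff, CoolW⟩ ⟨Eenv r t valOn, KK⟩ := by
      have := CStepU.actWrite (ustep_prefWrite_write 0 valOn KK) hinv
      rwa [updateAct_Eenv] at this
    exact ⟨_, _, Relation.ReflTransGen.single step2, mkTick_KK (by linarith) (by linarith)⟩
  -- KK
  · exact ⟨_, _, Relation.ReflTransGen.refl, mkTick_KK (by linarith) (by linarith)⟩
  -- ticks 4..1 RE
  · exact ⟨_, _, Relation.ReflTransGen.refl,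
      mkTick_tick (P := Proc.ticks 3 RE) (by linarith) (by linarith)⟩
  · exact ⟨_, _, Relation.ReflTransGen.refl,
      mkTick_tick (P := Proc.ticks 2 RE) (by linarith) (by linarith)⟩
  · exact ⟨_, _, Relation.ReflTransGen.refl,
      mkTick_tick (P := Proc.ticks 1 RE) (by linarith) (by linarith)⟩
  · exact ⟨_, _, Relation.ReflTransGen.refl,
      mkTick_tick (P := RE) (by linarith) (by linarith)⟩
  -- RE
  · have hinv : invHolds (Eenv r t valOn) := invHolds_Eenv.2 ⟨by linarith, by linarith⟩
    have hmem : t ∈ readSensor (Eenv r t valOn) 0 :=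
      mem_readSensor_Eenv.2 ⟨by linarith, by linarith⟩
    have h10 : ¬ 10 < t := by linarith
    have step1 : TauStep ⟨Eenv r t valOn, RE⟩ ⟨Eenv r t valOn, c5P⟩ := by
      have := CStepU.sensRead (ustep_RE_read t) hinv hmem
      rwa [show hE t = c5P by simp [hE, h10]] at this
    have step2 : TauStep ⟨Eenv r t valOn, c5P⟩ ⟨Eenv r t valOff, .tick Ctl⟩ := by
      have := CStepU.actWrite (ustep_prefWrite_write 0 valOff (.tick Ctl)) hinv
      rwa [updateAct_Eenv] at this
    exact ⟨⟨Eenv r t valOff, .tick Ctl⟩, _,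
      (Relation.ReflTransGen.single step1).tail step2,
      mkTick_tick (by linarith) (by linarith)⟩
  -- c5
  · have hinv : invHolds (Eenv r t valOn) := invHolds_Eenv.2 ⟨by linarith, by linarith⟩
    have step2 : TauStep ⟨Eenv r t valOn, c5P⟩ ⟨Eenv r t valOff, .tick Ctl⟩ := by
      have := CStepU.actWrite (ustep_prefWrite_write 0 valOff (.tick Ctl)) hinv
      rwa [updateAct_Eenv] at this
    exact ⟨_, _, Relation.ReflTransGen.single step2, mkTick_tick (by linarith) (by linarith)⟩

theorem InvP_weakTau {r : ℝ} (hr : 0.8 ≤ r) (hr' : r ≤ 1) {N N' : CPS}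
    (h : InvP r N) (hw : WeakTau N N') : InvP r N' := by
  induction hw with
  | refl => exact h
  | tail _ hstep ih => exact (InvP_closed hr hr' ih hstep).1

end EngineStates

/-- **Bisimilarity of engine variants** (Proposition 3): `Eng ≈ Enḡ`, where
`Enḡ` uses cooling power 0.8 instead of 1. -/
theorem eng_bisim_engBar : Bisim Eng EngBar := by
  have key : ∀ (r1 r2 : ℝ), 0.8 ≤ r1 → r1 ≤ 1 → 0.8 ≤ r2 → r2 ≤ 1 →
      ∀ {M N α M'}, InvP r1 M → InvP r2 N → CStep M α M' →
        ∃ N', WeakHat N α N' ∧ (InvP r1 M' ∧ InvP r2 N') := by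
    intro r1 r2 a b c d M N α M' hM hN hs
    obtain ⟨hM', hα⟩ := InvP_closed a b hM hs
    rcases hα with rfl | rfl
    · exact ⟨N, Relation.ReflTransGen.refl, hM', hN⟩
    · obtain ⟨N₁, N₂, hw, ht⟩ := InvP_weakTick hN
      have hN1 := InvP_weakTau c d hN hw
      have hN2 := (InvP_closed c d hN1 ht).1
      exact ⟨N₂, ⟨N₁, N₂, hw, ht, Relation.ReflTransGen.refl⟩, hM', hN2⟩
  refine ⟨fun M N => (InvP 1 M ∧ InvP 0.8 N) ∨ (InvP 0.8 M ∧ InvP 1 N), ⟨?_, ?_⟩, ?_⟩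
  · rintro M N (⟨hM, hN⟩ | ⟨hM, hN⟩)
    · exact Or.inr ⟨hN, hM⟩
    · exact Or.inl ⟨hN, hM⟩
  · rintro M N α M' (⟨hM, hN⟩ | ⟨hM, hN⟩) hs
    · obtain ⟨N', hw, h1, h2⟩ := key 1 0.8 (by norm_num) (by norm_num) (by norm_num)
        (by norm_num) hM hN hs
      exact ⟨N', hw, Or.inl ⟨h1, h2⟩⟩
    · obtain ⟨N', hw, h1, h2⟩ := key 0.8 1 (by norm_num) (by norm_num) (by norm_num)
        (by norm_num) hM hN hs
      exact ⟨N', hw, Or.inr ⟨h1, h2⟩⟩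
  · refine Or.inl ⟨⟨0, Or.inl ⟨rfl, by norm_num, by norm_num⟩⟩,
      ⟨0, Or.inl ⟨rfl, by norm_num, by norm_num⟩⟩⟩

end CCPS
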